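/- arXiv:1911.00668 — 2 statements merged into one kernel-verified Lean document; each statement's English description precedes it below -/
import Mathlib

section
/- With P(l) as above (probabilities of the 2^m packet-arrival patterns) and N(l) the associated diagonal 0-1 matrices, and R ∈ ℝ^{m×m} symmetric positive definite, the averaged matrix L = Σ_{l=0}^{2^m−1} P(l) · N(l) R N(l) is positive definite provided pʰ > 0 for all h ∈ {1,...,m}. -/
open Matrix

/-- The packet-arrival-averaged control weighting matrix is positive definite when
every channel has positive arrival probability. -/
theorem averaged_weighting_posdef (m : ℕ) (p : Fin m → ℝ)
    (hp0 : ∀ h, 0 < p h) (hp1 : ∀ h, p h ≤ 1)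
    (P : Fin (2 ^ m) → ℝ)
    (hP : ∀ l, P l = ∏ h : Fin m,
      if Nat.testBit l.val h.val then p h else 1 - p h)
    (N : Fin (2 ^ m) → Matrix (Fin m) (Fin m) ℝ)
    (hN : ∀ l, N l = Matrix.diagonal fun h : Fin m =>
      if Nat.testBit l.val h.val then (1 : ℝ) else 0)
    (R : Matrix (Fin m) (Fin m) ℝ) (hR : R.PosDef) :
    (∑ l, P l • (N l * R * N l)).PosDef := by
  have hPnn : ∀ l, 0 ≤ P l := by
    intro l
    rw [hP]
    refine Finset.prod_nonneg fun h _ => ?_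
    split
    · exact (hp0 h).le
    · linarith [hp1 h]
  have hNH : ∀ l, (N l)ᴴ = N l := by
    intro l; rw [hN]; simp [Matrix.diagonal_conjTranspose]
  have hterm : ∀ l, (P l • (N l * R * N l)).PosSemidef := by
    intro l
    have h1 : (N l * R * (N l)ᴴ).PosSemidef :=
      hR.posSemidef.mul_mul_conjTranspose_same (N l)
    rw [hNH] at h1
    refine Matrix.PosSemidef.of_dotProduct_mulVec_nonneg ?_ fun y => ?_
    · unfold Matrix.IsHermitian
      rw [Matrix.conjTranspose_smul, h1.1, star_trivial]
    · rw [Matrix.smul_mulVec, dotProduct_smul, smul_eq_mul]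
      exact mul_nonneg (hPnn l) (h1.dotProduct_mulVec_nonneg y)
  have hsum : ∀ (M : Fin (2 ^ m) → Matrix (Fin m) (Fin m) ℝ) (x : Fin m → ℝ),
      star x ⬝ᵥ (∑ l, M l) *ᵥ x = ∑ l, star x ⬝ᵥ (M l) *ᵥ x := by
    intro M x
    induction (Finset.univ : Finset (Fin (2 ^ m))) using Finset.cons_induction with
    | empty => simp
    | cons a s ha ih =>
      rw [Finset.sum_cons, Finset.sum_cons, Matrix.add_mulVec, dotProduct_add, ih]
  refine Matrix.PosDef.of_dotProduct_mulVec_pos ?_ ?_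
  · unfold Matrix.IsHermitian
    rw [Matrix.conjTranspose_sum]
    exact Finset.sum_congr rfl fun l _ => (hterm l).1
  · intro x hx
    rw [hsum]
    have hle : ∀ l ∈ Finset.univ, (0:ℝ) ≤ star x ⬝ᵥ (P l • (N l * R * N l)) *ᵥ x :=
      fun l _ => (hterm l).dotProduct_mulVec_nonneg x
    have h1 : 2 ^ m - 1 < 2 ^ m := Nat.sub_lt (Nat.pow_pos (n := m) (by norm_num)) one_pos
    set lf : Fin (2 ^ m) := ⟨2 ^ m - 1, h1⟩ with hlf
    refine Finset.sum_pos' hle ⟨lf, Finset.mem_univ _, ?_⟩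
    have hNlf : N lf = 1 := by
      rw [hN]
      have : (fun h : Fin m => if Nat.testBit lf.val h.val then (1:ℝ) else 0)
          = fun _ => 1 := by
        funext h
        simp [hlf, Nat.testBit_two_pow_sub_one, h.isLt]
      rw [this, Matrix.diagonal_one]
    have hPlf : 0 < P lf := by
      rw [hP]
      refine Finset.prod_pos fun h _ => ?_
      have hb : Nat.testBit lf.val h.val = true := by
        simp [hlf, Nat.testBit_two_pow_sub_one, h.isLt]
      rw [if_pos hb]
      exact hp0 h
    rw [Matrix.smul_mulVec, dotProduct_smul, smul_eq_mul, hNlf]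
    simp only [Matrix.one_mul, Matrix.mul_one]
    exact mul_pos hPlf (hR.dotProduct_mulVec_pos hx)
end

section
/- Under the one-step value recursion above, if X_{k+1}(l) ≤ X'_{k+1}(l) in the Loewner order for all l (with both recursions well defined, i.e., the concavity conditions γ²I − Dᵀ(Σ_l P(l) X_{k+1}(l))D > 0 and γ²I − Dᵀ(Σ_l P(l) X'_{k+1}(l))D > 0 hold), then the resulting value matrices satisfy Ξ_k ≤ Ξ'_k (monotonicity of the minimax Riccati operator). -/
open Matrix

/-- Monotonicity of the minimax Riccati operator with respect to the Loewner order. -/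
theorem riccati_monotone {n m s L : ℕ}
    (W : Matrix (Fin n) (Fin n) ℝ) (γ : ℝ)
    (A : Matrix (Fin n) (Fin n) ℝ) (B : Matrix (Fin n) (Fin m) ℝ)
    (D : Matrix (Fin n) (Fin s) ℝ)
    (N : Fin L → Matrix (Fin m) (Fin m) ℝ)
    (Q : Matrix (Fin m) (Fin m) ℝ)
    (P : Fin L → ℝ) (hPnn : ∀ l, 0 ≤ P l) (hPsum : ∑ l, P l = 1)
    (X X' : Fin L → Matrix (Fin n) (Fin n) ℝ)
    (hW : W.PosSemidef) (hQ : Q.PosDef)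
    (hX : ∀ l, (X l).PosSemidef) (hX' : ∀ l, (X' l).PosSemidef)
    (hle : ∀ l, (X' l - X l).PosSemidef)
    (hconc : ((γ ^ 2 : ℝ) • (1 : Matrix (Fin s) (Fin s) ℝ) -
      Dᵀ * (∑ l, P l • X l) * D).PosDef)
    (hconc' : ((γ ^ 2 : ℝ) • (1 : Matrix (Fin s) (Fin s) ℝ) -
      Dᵀ * (∑ l, P l • X' l) * D).PosDef)
    (Ξ Ξ' : Matrix (Fin n) (Fin n) ℝ)
    (hΞ : Ξ.IsHermitian) (hΞ' : Ξ'.IsHermitian)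
    (hV : ∀ x : Fin n → ℝ, x ⬝ᵥ Ξ.mulVec x =
      ⨅ u : Fin m → ℝ, ⨆ w : Fin s → ℝ,
        x ⬝ᵥ W.mulVec x + u ⬝ᵥ Q.mulVec u - γ ^ 2 * (w ⬝ᵥ w) +
          ∑ l, P l *
            ((A.mulVec x + B.mulVec ((N l).mulVec u) + D.mulVec w) ⬝ᵥ
              (X l).mulVec (A.mulVec x + B.mulVec ((N l).mulVec u) + D.mulVec w)))
    (hV' : ∀ x : Fin n → ℝ, x ⬝ᵥ Ξ'.mulVec x =
      ⨅ u : Fin m → ℝ, ⨆ w : Fin s → ℝ,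
        x ⬝ᵥ W.mulVec x + u ⬝ᵥ Q.mulVec u - γ ^ 2 * (w ⬝ᵥ w) +
          ∑ l, P l *
            ((A.mulVec x + B.mulVec ((N l).mulVec u) + D.mulVec w) ⬝ᵥ
              (X' l).mulVec (A.mulVec x + B.mulVec ((N l).mulVec u) + D.mulVec w)))
    (hbdd : ∀ x : Fin n → ℝ, BddBelow (Set.range fun u : Fin m → ℝ =>
      ⨆ w : Fin s → ℝ,
        x ⬝ᵥ W.mulVec x + u ⬝ᵥ Q.mulVec u - γ ^ 2 * (w ⬝ᵥ w) +
          ∑ l, P l *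
            ((A.mulVec x + B.mulVec ((N l).mulVec u) + D.mulVec w) ⬝ᵥ
              (X l).mulVec (A.mulVec x + B.mulVec ((N l).mulVec u) + D.mulVec w))))
    (hbdd' : ∀ (x : Fin n → ℝ) (u : Fin m → ℝ), BddAbove (Set.range fun w : Fin s → ℝ =>
        x ⬝ᵥ W.mulVec x + u ⬝ᵥ Q.mulVec u - γ ^ 2 * (w ⬝ᵥ w) +
          ∑ l, P l *
            ((A.mulVec x + B.mulVec ((N l).mulVec u) + D.mulVec w) ⬝ᵥ
              (X' l).mulVec (A.mulVec x + B.mulVec ((N l).mulVec u) + D.mulVec w)))) :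
    (Ξ' - Ξ).PosSemidef := by
  rw [posSemidef_iff_dotProduct_mulVec]
  constructor
  · exact hΞ'.sub hΞ
  · intro x
    have key : x ⬝ᵥ Ξ.mulVec x ≤ x ⬝ᵥ Ξ'.mulVec x := by
      rw [hV x, hV' x]
      apply ciInf_mono (hbdd x)
      intro u
      apply ciSup_mono (hbdd' x u)
      intro w
      gcongr _ + ?_
      apply Finset.sum_le_sum
      intro l _
      have h := (hle l).dotProduct_mulVec_nonneg (A.mulVec x + B.mulVec ((N l).mulVec u) + D.mulVec w)
      simp only [star_trivial, sub_mulVec, dotProduct_sub, RCLike.re_to_real] at h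
      have := sub_nonneg.mp h
      nlinarith [hPnn l, this]
    have : 0 ≤ x ⬝ᵥ (Ξ' - Ξ).mulVec x := by
      rw [sub_mulVec, dotProduct_sub]; linarith
    simpa using this
end
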